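/- Let M be a matroid with weights w': U → ℝ_{≥0}, and for each independent set S let R(S) be the maximum-weight basis of the contraction M/S, with f(S) = w'(R(S)). Then for any independent set J of M, the function f is submodular on subsets of J: for all S ⊆ J and x, y ∈ J \ S with S ∪ {x,y} independent, f(S) - f(S ∪ {x}) ≤ f(S ∪ {y}) - f(S ∪ {x,y}). -/

import Mathlib

open scoped BigOperators

open Set

/-- Symmetric basis exchange: for bases `A`, `B` and `y ∈ B \ A`, there is `e ∈ A \ B` such
that both `insert y (A \ {e})` and `insert e (B \ {y})` are bases. -/
private lemma sym_exch {α : Type*} {M : Matroid α} {A B : Set α} {y : α}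
    (hA : M.IsBase A) (hB : M.IsBase B) (hyB : y ∈ B) (hyA : y ∉ A) :
    ∃ e ∈ A \ B, M.IsBase (insert y (A \ {e})) ∧ M.IsBase (insert e (B \ {y})) := by
  set H := M.closure (B \ {y}) with hH
  have hyH : y ∉ H := hB.indep.notMem_closure_sdiff_of_mem hyB
  set K := A ∩ H with hKdef
  have hKi : M.Indep K := hA.indep.subset inter_subset_left
  have hyK : y ∉ K := fun h => hyH h.2
  have hclK : M.closure K ⊆ H := by
    have h1 : M.closure K ⊆ M.closure H := M.closure_subset_closure inter_subset_right
    rwa [hH, M.closure_closure] at h1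
  have hKy : M.Indep (insert y K) := by
    rw [hKi.insert_indep_iff_of_notMem hyK]
    exact ⟨hB.subset_ground hyB, fun h => hyH (hclK h)⟩
  have hsub : insert y K ⊆ insert y A := insert_subset_insert inter_subset_left
  obtain ⟨A', hA'b, hKA'⟩ := hKy.subset_isBasis_of_subset hsub
    (insert_subset (hB.subset_ground hyB) hA.subset_ground)
  have hA'base : M.IsBase A' := hA'b.isBase_of_isBase_subset hA (subset_insert _ _)
  have hyA' : y ∈ A' := hKA' (mem_insert _ _)
  have hA'dA : A' \ A = {y} := by
    apply Subset.antisymm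
    · intro z hz
      rcases hA'b.subset hz.1 with h | h
      · exact h
      · exact absurd h hz.2
    · intro z hz
      rw [mem_singleton_iff] at hz
      subst hz
      exact ⟨hyA', hyA⟩
  have hcard : (A \ A').encard = 1 := by
    rw [hA.encard_sdiff_comm hA'base, hA'dA, encard_singleton]
  obtain ⟨e, he⟩ := encard_eq_one.1 hcard
  have heA : e ∈ A := (he ▸ (mem_singleton e : e ∈ ({e} : Set α))).1
  have heA' : e ∉ A' := (he ▸ (mem_singleton e : e ∈ ({e} : Set α))).2
  have heK : e ∉ K := fun h => heA' (hKA' (mem_insert_of_mem _ h))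
  have heH : e ∉ H := fun h => heK ⟨heA, h⟩
  have heB : e ∉ B := by
    intro h
    rcases eq_or_ne e y with rfl | hne
    · exact hyA heA
    · exact heH (M.subset_closure (B \ {y})
        (diff_subset.trans hB.subset_ground) ⟨h, hne⟩)
  have hA'eq : A' = insert y (A \ {e}) := by
    apply Subset.antisymm
    · intro z hz
      rcases hA'b.subset hz with h | h
      · exact h ▸ mem_insert _ _
      · refine mem_insert_of_mem _ ⟨h, ?_⟩
        intro hze
        subst hze
        exact heA' hz
    · intro z hz
      rcases hz with rfl | ⟨hzA, hze⟩
      · exact hyA'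
      · by_contra hzA'
        have : z ∈ A \ A' := ⟨hzA, hzA'⟩
        rw [he, mem_singleton_iff] at this
        exact hze this
  have hB'indep : M.Indep (insert e (B \ {y})) := by
    have hBd : M.Indep (B \ {y}) := hB.indep.subset diff_subset
    have heBd : e ∉ B \ {y} := fun h => heB h.1
    rw [hBd.insert_indep_iff_of_notMem heBd]
    exact ⟨hA.subset_ground heA, heH⟩
  exact ⟨e, ⟨heA, heB⟩, hA'eq ▸ hA'base,
    hB.exchange_isBase_of_indep heB hB'indep⟩

private lemma wsum_split {α : Type*} {M : Matroid α} [M.Finite] (w' : α → ℝ)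
    {P C : Set α} (hC : M.IsBase C) (hP : P ⊆ C) :
    ∑ᶠ e ∈ C, w' e = (∑ᶠ e ∈ P, w' e) + ∑ᶠ e ∈ C \ P, w' e := by
  have h := finsum_mem_union (f := w') (disjoint_sdiff_right : Disjoint P (C \ P))
    (hC.finite.subset hP) (hC.finite.diff)
  rwa [union_diff_cancel hP] at h

/-- Submodularity of `f(S) = w'(R(S))`, where `R(S)` is the maximum-weight basis of the
contraction `M/S` for an independent set `S`: for `S ∪ {x,y}` independent,
`f(S) - f(S ∪ {x}) ≤ f(S ∪ {y}) - f(S ∪ {x,y})`. -/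
theorem stmt8 {α : Type*} (M : Matroid α) [M.Finite] (w' : α → ℝ)
    (hw'nonneg : ∀ e, 0 ≤ w' e) (hw'inj : Function.Injective w')
    (R : Set α → Set α)
    (hR : ∀ S, M.Indep S →
      Disjoint (R S) S ∧ M.IsBase (S ∪ R S) ∧
      ∀ T, Disjoint T S → M.IsBase (S ∪ T) → ∑ᶠ e ∈ T, w' e ≤ ∑ᶠ e ∈ R S, w' e)
    (J : Set α) (hJ : M.Indep J) :
    ∀ S ⊆ J, ∀ x ∈ J \ S, ∀ y ∈ J \ S, x ≠ y → M.Indep (S ∪ {x, y}) →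
      (∑ᶠ e ∈ R S, w' e) - (∑ᶠ e ∈ R (S ∪ {x}), w' e) ≤
        (∑ᶠ e ∈ R (S ∪ {y}), w' e) - (∑ᶠ e ∈ R (S ∪ {x, y}), w' e) := by
  intro S hSJ x hx y hy hxy hIxy
  set W : Set α → ℝ := fun X => ∑ᶠ e ∈ X, w' e with hW
  have hxS : x ∉ S := hx.2
  have hyS : y ∉ S := hy.2
  -- independence of the various sets
  have hSi : M.Indep S := hIxy.subset subset_union_left
  have hSxi : M.Indep (S ∪ {x}) :=
    hIxy.subset (union_subset_union_right S (by simp))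
  have hSyi : M.Indep (S ∪ {y}) :=
    hIxy.subset (union_subset_union_right S (by simp))
  -- the value of f at an independent set, via its completion to a base
  have f_eq : ∀ P, M.Indep P → ∀ h : Disjoint (R P) P,
      M.IsBase (P ∪ R P) → W (R P) = W (P ∪ R P) - W P := by
    intro P hP hdisj hbase
    have hPC : P ⊆ P ∪ R P := subset_union_left
    have h1 := wsum_split w' hbase hPC
    have h2 : (P ∪ R P) \ P = R P := by
      rw [union_diff_left, sdiff_eq_left.2 hdisj]
    rw [h2] at h1
    simp only [hW]
    linarith
  -- the lower bound for f at an independent set, via any base containing it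
  have f_ge : ∀ P, M.Indep P → ∀ C, M.IsBase C → P ⊆ C →
      W C - W P ≤ W (R P) := by
    intro P hP C hC hPC
    obtain ⟨-, -, hmax⟩ := hR P hP
    have h1 := hmax (C \ P) disjoint_sdiff_left (by rwa [union_diff_cancel hPC])
    have h2 := wsum_split w' hC hPC
    simp only [hW]
    linarith
  -- bases for S and S ∪ {x,y}
  obtain ⟨hdS, hbS, -⟩ := hR S hSi
  obtain ⟨hdSxy, hbSxy, -⟩ := hR (S ∪ {x, y}) hIxy
  set A : Set α := S ∪ R S with hA
  set B : Set α := (S ∪ {x, y}) ∪ R (S ∪ {x, y}) with hB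
  have hSA : S ⊆ A := subset_union_left
  have hSxyB : S ∪ {x, y} ⊆ B := subset_union_left
  have hxB : x ∈ B := hSxyB (Or.inr (by simp))
  have hyB : y ∈ B := hSxyB (Or.inr (by simp))
  have hSB : S ⊆ B := subset_union_left.trans hSxyB
  -- weights of the small sets
  have hSfin : S.Finite := hSi.finite
  have hWx : W (S ∪ {x}) = W S + w' x := by
    simp only [hW]
    rw [union_singleton, finsum_mem_insert w' hxS hSfin]
    ring
  have hWy : W (S ∪ {y}) = W S + w' y := by
    simp only [hW]
    rw [union_singleton, finsum_mem_insert w' hyS hSfin]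
    ring
  have hWxy : W (S ∪ {x, y}) = W S + w' x + w' y := by
    simp only [hW]
    have h1 : Disjoint S ({x, y} : Set α) := by
      rw [Set.disjoint_left]
      intro a ha hmem
      rcases hmem with h | h
      · exact hxS (h ▸ ha)
      · exact hyS ((mem_singleton_iff.1 h) ▸ ha)
    rw [finsum_mem_union h1 hSfin (by simp)]
    have h2 : (∑ᶠ e ∈ ({x, y} : Set α), w' e) = w' x + w' y := by
      rw [show ({x, y} : Set α) = insert x {y} from rfl,
        finsum_mem_insert w' (by simpa using hxy) (by simp), finsum_mem_singleton]
    rw [h2]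
    ring
  have hfS : W (R S) = W A - W S := f_eq S hSi hdS hbS
  have hfSxy : W (R (S ∪ {x, y})) = W B - W (S ∪ {x, y}) :=
    f_eq _ hIxy hdSxy hbSxy
  -- main case split: find bases Bx ⊇ S ∪ {x}, By ⊇ S ∪ {y} with W Bx + W By = W A + W B
  have key : ∃ Bx By : Set α, M.IsBase Bx ∧ M.IsBase By ∧ S ∪ {x} ⊆ Bx ∧ S ∪ {y} ⊆ By ∧
      W Bx + W By = W A + W B := by
    by_cases hyA : y ∈ A
    · exact ⟨B, A, hbSxy, hbS, (union_subset_union_right S (by simp)).trans hSxyB,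
        union_subset hSA (by simpa using hyA), by ring⟩
    · obtain ⟨e, ⟨heA, heB⟩, hAy, hBe⟩ := sym_exch hbS hbSxy hyB hyA
      have heS : e ∉ S := fun h => heB (hSB h)
      refine ⟨insert e (B \ {y}), insert y (A \ {e}), hBe, hAy, ?_, ?_, ?_⟩
      · rintro z (hz | hz)
        · exact mem_insert_of_mem _ ⟨hSB hz, fun h => hyS (h ▸ hz)⟩
        · rw [mem_singleton_iff] at hz
          subst hz
          exact mem_insert_of_mem _ ⟨hxB, by simpa using hxy⟩
      · rintro z (hz | hz)
        · exact mem_insert_of_mem _ ⟨hSA hz, fun h => heS (h ▸ hz)⟩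
        · rw [mem_singleton_iff] at hz
          subst hz
          exact mem_insert _ _
      · have hWA : W A = w' e + W (A \ {e}) := by
          have := wsum_split w' hbS (singleton_subset_iff.2 heA)
          simpa [hW, finsum_mem_singleton] using this
        have hWB : W B = w' y + W (B \ {y}) := by
          have := wsum_split w' hbSxy (singleton_subset_iff.2 hyB)
          simpa [hW, finsum_mem_singleton] using this
        have hWBe : W (insert e (B \ {y})) = w' e + W (B \ {y}) := by
          simp only [hW]
          rw [finsum_mem_insert w' (fun (h : e ∈ B \ {y}) => heB h.1) (hbSxy.finite.diff)]
        have hWAy : W (insert y (A \ {e})) = w' y + W (A \ {e}) := by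
          simp only [hW]
          rw [finsum_mem_insert w' (fun (h : y ∈ A \ {e}) => hyA h.1) (hbS.finite.diff)]
        rw [hWBe, hWAy, hWA, hWB]
        ring
  obtain ⟨Bx, By, hBx, hBy, hSxBx, hSyBy, hsum⟩ := key
  have hgex := f_ge (S ∪ {x}) hSxi Bx hBx hSxBx
  have hgey := f_ge (S ∪ {y}) hSyi By hBy hSyBy
  show W (R S) - W (R (S ∪ {x})) ≤ W (R (S ∪ {y})) - W (R (S ∪ {x, y}))
  rw [hfS, hfSxy, hWxy]
  rw [hWx] at hgex
  rw [hWy] at hgey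
  linarith
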